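/- Define the parity-constrained Hanoi graph P^n on vertex set V(P^n) = {s ∈ {0,1,2,3}^n : s_d ≠ 2 for even d, s_d ≠ 1 for odd d}, where s and t are adjacent iff they differ in exactly one coordinate d, both values s_d, t_d lie in the allowed peg set of disc d, and no coordinate k < d of the common part equals s_d or t_d. Then for all n ≥ 1, the minimum degree of P^n equals 2. -/

import Mathlib

/-- Parity constraint on a state: disc `d+1` (labelled `1,…,n`) may not sit on
peg `2` if it is even, nor on peg `1` if it is odd. -/
def pegOK (n : ℕ) (s : Fin n → Fin 4) : Prop :=
  ∀ d : Fin n, (Even ((d : ℕ) + 1) → s d ≠ 2) ∧ (Odd ((d : ℕ) + 1) → s d ≠ 1)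

instance (n : ℕ) : DecidablePred (pegOK n) := fun s => by
  unfold pegOK; infer_instance

/-- Vertices of the parity-constrained Hanoi graph `P^n`. -/
abbrev PVertex (n : ℕ) := {s : Fin n → Fin 4 // pegOK n s}

/-- The parity-constrained four-peg Hanoi graph `P^n`: two states are adjacent iff
they differ in exactly one coordinate `d` (a legal move of disc `d+1`) and no
smaller disc sits on either of the two pegs involved. -/
def PGraph (n : ℕ) : SimpleGraph (PVertex n) where
  Adj s t := ∃ d : Fin n,
    s.1 d ≠ t.1 d ∧ (∀ k, k ≠ d → s.1 k = t.1 k) ∧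
    (∀ k, k < d → s.1 k ≠ s.1 d ∧ s.1 k ≠ t.1 d)
  symm := by
    constructor
    rintro s t ⟨d, hne, heq, hlt⟩
    refine ⟨d, hne.symm, fun k hk => (heq k hk).symm, fun k hk => ?_⟩
    have h := hlt k hk
    rw [← heq k (ne_of_lt hk)]
    exact ⟨h.2, h.1⟩
  loopless := by constructor; rintro s ⟨d, hne, -⟩; exact hne rfl

instance (n : ℕ) : DecidableRel (PGraph n).Adj := fun s t =>
  decidable_of_iff (∃ d : Fin n,
    s.1 d ≠ t.1 d ∧ (∀ k, k ≠ d → s.1 k = t.1 k) ∧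
    (∀ k, k < d → s.1 k ≠ s.1 d ∧ s.1 k ≠ t.1 d)) Iff.rfl

section Aux

variable (m : ℕ)

/-- peg value `a ≠ 1` may be placed at coordinate 0. -/
def updV (s : PVertex (m+1)) (a : Fin 4) (ha : a ≠ 1) : PVertex (m+1) :=
  ⟨Function.update s.1 0 a, by
    intro d
    by_cases hd : d = 0
    · subst hd
      simp only [Function.update_self]
      constructor
      · intro h; exact absurd h (by simp [Nat.even_iff])
      · intro _; exact ha
    · rw [Function.update_of_ne hd]
      exact s.2 d⟩

lemma updV_adj (s : PVertex (m+1)) (a : Fin 4) (ha : a ≠ 1) (hne : s.1 0 ≠ a) :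
    (PGraph (m+1)).Adj s (updV m s a ha) := by
  refine ⟨0, ?_, ?_, ?_⟩
  · simpa [updV, Function.update_self] using hne
  · intro k hk; simp [updV, Function.update_of_ne hk]
  · intro k hk; exact absurd hk (Fin.not_lt_zero k)

/-- the all-zero vertex -/
def zv : PVertex (m+1) :=
  ⟨fun _ => 0, by
    intro d
    refine ⟨fun _ => ?_, fun _ => ?_⟩ <;> · show (0 : Fin 4) ≠ _; decide⟩

lemma two_le_degree (v : PVertex (m+1)) : 2 ≤ (PGraph (m+1)).degree v := by
  have key : ∀ x : Fin 4, x ≠ 1 →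
      ∃ a b : Fin 4, a ≠ b ∧ a ≠ 1 ∧ b ≠ 1 ∧ x ≠ a ∧ x ≠ b := by decide
  have hv1 : v.1 0 ≠ 1 := (v.2 0).2 (by simp)
  obtain ⟨a, b, hab, ha1, hb1, hxa, hxb⟩ := key _ hv1
  rw [← SimpleGraph.card_neighborFinset_eq_degree]
  apply Finset.one_lt_card.mpr
  refine ⟨updV m v a ha1, ?_, updV m v b hb1, ?_, ?_⟩
  · rw [SimpleGraph.mem_neighborFinset]; exact updV_adj m v a ha1 hxa
  · rw [SimpleGraph.mem_neighborFinset]; exact updV_adj m v b hb1 hxb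
  · intro h
    have := congrArg (fun t => t.1 0) h
    simp only [updV, Function.update_self] at this
    exact hab this

lemma degree_zv : (PGraph (m+1)).degree (zv m) = 2 := by
  have hub : (PGraph (m+1)).neighborFinset (zv m) ⊆
      {updV m (zv m) 2 (by decide), updV m (zv m) 3 (by decide)} := by
    intro t ht
    rw [SimpleGraph.mem_neighborFinset] at ht
    obtain ⟨d, hne, heq, hlt⟩ := ht
    have hd0 : d = 0 := by
      by_contra hd
      have h0d : (0 : Fin (m+1)) < d := Fin.pos_of_ne_zero hd
      exact (hlt 0 h0d).1 rfl
    subst hd0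
    have ht0 : t.1 0 ≠ 0 := fun h => hne ((h.symm))
    have ht1 : t.1 0 ≠ 1 := (t.2 0).2 (by simp)
    have htk : ∀ k, k ≠ 0 → t.1 k = 0 := fun k hk => (heq k hk).symm
    have hcases : t.1 0 = 2 ∨ t.1 0 = 3 := by
      have key : ∀ x : Fin 4, x ≠ 0 → x ≠ 1 → x = 2 ∨ x = 3 := by decide
      exact key _ ht0 ht1
    simp only [Finset.mem_insert, Finset.mem_singleton]
    rcases hcases with h | h
    · left
      apply Subtype.ext
      funext k
      by_cases hk : k = 0
      · subst hk; simp [updV, Function.update_self, h]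
      · rw [htk k hk]; simp [updV, Function.update_of_ne hk, zv]
    · right
      apply Subtype.ext
      funext k
      by_cases hk : k = 0
      · subst hk; simp [updV, Function.update_self, h]
      · rw [htk k hk]; simp [updV, Function.update_of_ne hk, zv]
  have hle : (PGraph (m+1)).degree (zv m) ≤ 2 := by
    rw [← SimpleGraph.card_neighborFinset_eq_degree]
    calc _ ≤ _ := Finset.card_le_card hub
    _ ≤ 2 := Finset.card_insert_le _ _ |>.trans (by simp)
  exact le_antisymm hle (two_le_degree m (zv m))

end Aux

/-- The minimum degree of the parity-constrained Hanoi graph `P^n` equals `2`. -/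
theorem stmt10 : ∀ n : ℕ, 1 ≤ n → (PGraph n).minDegree = 2 := by
  intro n hn
  obtain ⟨m, rfl⟩ := Nat.exists_eq_add_of_le hn
  rw [Nat.add_comm]
  haveI : Nonempty (PVertex (m+1)) := ⟨zv m⟩
  apply le_antisymm
  · rw [← degree_zv m]; exact SimpleGraph.minDegree_le_degree _ _
  · exact SimpleGraph.le_minDegree_of_forall_le_degree _ 2 (two_le_degree m)
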